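/- Let h(z₁,...,z_d) = Σ_{k ∈ [n]^d} c_k z₁^{k₁}···z_d^{k_d} be a nonzero polynomial with all coefficients c_k ∈ {0, ±1}, which is n^μ-sparse for some μ ∈ [0,1). Then for any Δ ≥ 1 and any L with 1 ≤ L ≤ n^Δ, there exist z₁,...,z_d ∈ γ(L) such that |h(z₁,...,z_d)| ≥ exp(-C Δ L n^{1-μ} log n), where C depends only on d and μ. -/

import Mathlib

open Real Complex Finset

lemma norm_exp_sub_one_ge (x : ℝ) (hx : |x| ≤ π) :
    2 * |x| / π ≤ ‖Complex.exp (x * I) - 1‖ := by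
  have hπ := Real.pi_pos
  have hsq : ‖Complex.exp (x * I) - 1‖ ^ 2 = 2 - 2 * Real.cos x := by
    rw [Complex.sq_norm, Complex.normSq_apply]
    simp only [Complex.sub_re, Complex.sub_im, Complex.one_re, Complex.one_im,
      Complex.exp_ofReal_mul_I_re, Complex.exp_ofReal_mul_I_im]
    nlinarith [Real.sin_sq_add_cos_sq x]
  have hcos := Real.cos_le_one_sub_mul_cos_sq hx
  have h1 : (2 * |x| / π) ^ 2 ≤ ‖Complex.exp (x * I) - 1‖ ^ 2 := by
    rw [hsq]
    have hax : |x| ^ 2 = x ^ 2 := _root_.sq_abs x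
    have : (2 * |x| / π) ^ 2 = 2 / π ^ 2 * x ^ 2 * 2 := by
      rw [div_pow, mul_pow, hax]; ring
    nlinarith
  have h2 : 0 ≤ 2 * |x| / π := by positivity
  nlinarith [norm_nonneg (Complex.exp (x * I) - 1)]

lemma key_lemma {ι : Type*} [DecidableEq ι] (lam : ι → ℤ) (η : ℝ) (hη0 : 0 < η) (hηπ : η ≤ π) :
    ∀ (N : ℕ) (S : Finset ι), S.card = N + 1 → ∀ (a : ι → ℂ) (m₀ : ι), m₀ ∈ S →
    Set.InjOn lam S → ∀ t : ℝ,
    ∃ θ ∈ Set.Icc t (t + N * η),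
      ‖a m₀‖ * (η / (2 * π)) ^ N ≤ ‖∑ m ∈ S, a m * Complex.exp ((lam m : ℂ) * θ * I)‖ := by
  have hπ := Real.pi_pos
  intro N
  induction N with
  | zero =>
    intro S hS a m₀ hm₀ _ t
    obtain ⟨b, rfl⟩ := Finset.card_eq_one.mp hS
    obtain rfl : m₀ = b := Finset.mem_singleton.mp hm₀
    refine ⟨t, ⟨le_refl t, by simp⟩, ?_⟩
    rw [Finset.sum_singleton, pow_zero, mul_one, norm_mul]
    have : ‖Complex.exp ((lam m₀ : ℂ) * t * I)‖ = 1 := by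
      rw [show ((lam m₀ : ℂ) * t * I) = ((((lam m₀ : ℝ) * t : ℝ)) : ℂ) * I by push_cast; ring,
        Complex.norm_exp_ofReal_mul_I]
    rw [this, mul_one]
  | succ N ih =>
    intro S hS a m₀ hm₀ hinj t
    have hc2 : 1 < S.card := by omega
    obtain ⟨m₁, hm₁S, hm₁⟩ := Finset.exists_mem_ne hc2 m₀
    set Λ : ℤ := lam m₀ - lam m₁ with hΛ
    have hΛ0 : Λ ≠ 0 := by
      intro hz
      have hle : lam m₁ = lam m₀ := by omega
      exact hm₁ (hinj hm₁S hm₀ hle)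
    have hr1 : (1 : ℝ) ≤ |(Λ : ℝ)| := by
      rw [← Int.cast_abs]; exact_mod_cast Int.one_le_abs (by omega)
    have hr0 : (0 : ℝ) < |(Λ : ℝ)| := lt_of_lt_of_le one_pos hr1
    set r : ℝ := |(Λ : ℝ)| with hrdef
    set h : ℝ := if r * η ≤ π then η else π / r with hdef
    have hh0 : 0 < h := by
      rw [hdef]; split
      · exact hη0
      · positivity
    have hhη : h ≤ η := by
      rw [hdef]; split
      · exact le_refl η
      · rw [div_le_iff₀ hr0]
        nlinarith [not_le.mp (by assumption : ¬ r * η ≤ π)]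
    have hxbounds : η ≤ |(Λ : ℝ) * h| ∧ |(Λ : ℝ) * h| ≤ π := by
      rw [abs_mul, abs_of_pos hh0]
      rw [hdef]; split
      · constructor
        · nlinarith
        · nlinarith [(by assumption : r * η ≤ π)]
      · rw [mul_div_cancel₀ _ (ne_of_gt hr0)]
        exact ⟨hηπ, le_refl π⟩
    have hfac : η / π ≤ ‖Complex.exp (((Λ : ℝ) * h : ℝ) * I) - 1‖ := by
      refine le_trans ?_ (norm_exp_sub_one_ge _ hxbounds.2)
      rw [div_le_div_iff₀ hπ hπ]
      nlinarith [hxbounds.1]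
    -- new coefficients
    set a' : ι → ℂ := fun m => a m *
      (Complex.exp ((lam m : ℂ) * h * I) - Complex.exp ((lam m₁ : ℂ) * h * I)) with ha'
    have hcard' : (S.erase m₁).card = N + 1 := by
      rw [Finset.card_erase_of_mem hm₁S, hS]
      omega
    have hm₀' : m₀ ∈ S.erase m₁ := Finset.mem_erase.mpr ⟨fun hh => hm₁ hh.symm, hm₀⟩
    have hinj' : Set.InjOn lam (S.erase m₁) :=
      hinj.mono (fun x hx => Finset.mem_of_mem_erase hx)
    obtain ⟨θ', hθ'mem, hθ'⟩ := ih (S.erase m₁) hcard' a' m₀ hm₀' hinj' t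
    -- identity
    have hzero : a' m₁ * Complex.exp ((lam m₁ : ℂ) * θ' * I) = 0 := by
      rw [ha']; simp
    have hident : ∑ m ∈ S.erase m₁, a' m * Complex.exp ((lam m : ℂ) * θ' * I)
        = (∑ m ∈ S, a m * Complex.exp ((lam m : ℂ) * ((θ' + h : ℝ) : ℂ) * I))
          - Complex.exp ((lam m₁ : ℂ) * h * I) *
            ∑ m ∈ S, a m * Complex.exp ((lam m : ℂ) * θ' * I) := by
      rw [Finset.sum_erase (f := fun m => a' m * Complex.exp ((lam m : ℂ) * θ' * I)) S hzero]
      rw [Finset.mul_sum, ← Finset.sum_sub_distrib]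
      refine Finset.sum_congr rfl (fun m _ => ?_)
      rw [ha']
      have hsplit : ((lam m : ℂ) * ((θ' + h : ℝ) : ℂ) * I) = (lam m : ℂ) * θ' * I + (lam m : ℂ) * h * I := by
        push_cast; ring
      rw [hsplit, Complex.exp_add]
      ring
    have hnorm1 : ‖Complex.exp ((lam m₁ : ℂ) * h * I)‖ = 1 := by
      rw [show ((lam m₁ : ℂ) * h * I) = ((((lam m₁ : ℝ) * h : ℝ)) : ℂ) * I by push_cast; ring,
        Complex.norm_exp_ofReal_mul_I]
    have ha'm₀ : ‖a m₀‖ * (η / π) ≤ ‖a' m₀‖ := by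
      rw [ha']
      simp only [norm_mul]
      have hfactor : Complex.exp ((lam m₀ : ℂ) * h * I) - Complex.exp ((lam m₁ : ℂ) * h * I)
          = Complex.exp ((lam m₁ : ℂ) * h * I) *
            (Complex.exp (((Λ : ℝ) * h : ℝ) * I) - 1) := by
        rw [mul_sub, mul_one, ← Complex.exp_add]
        congr 1
        push_cast [hΛ]; ring
      rw [hfactor, norm_mul, hnorm1, one_mul]
      exact mul_le_mul_of_nonneg_left hfac (norm_nonneg _)
    -- combine
    set f : ℝ → ℂ := fun θ => ∑ m ∈ S, a m * Complex.exp ((lam m : ℂ) * θ * I) with hf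
    have hsum : ‖a m₀‖ * (η / π) * (η / (2*π)) ^ N ≤ ‖f (θ' + h)‖ + ‖f θ'‖ := by
      calc ‖a m₀‖ * (η / π) * (η / (2*π)) ^ N
          ≤ ‖a' m₀‖ * (η / (2*π)) ^ N := by
            apply mul_le_mul_of_nonneg_right ha'm₀ (by positivity)
        _ ≤ ‖∑ m ∈ S.erase m₁, a' m * Complex.exp ((lam m : ℂ) * θ' * I)‖ := hθ'
        _ = ‖f (θ' + h) - Complex.exp ((lam m₁ : ℂ) * h * I) * f θ'‖ := by rw [hident]
        _ ≤ ‖f (θ' + h)‖ + ‖Complex.exp ((lam m₁ : ℂ) * h * I) * f θ'‖ := norm_sub_le _ _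
        _ = ‖f (θ' + h)‖ + ‖f θ'‖ := by rw [norm_mul, hnorm1, one_mul]
    have hkey : ‖a m₀‖ * (η / (2*π)) ^ (N+1) ≤ max ‖f (θ' + h)‖ ‖f θ'‖ := by
      have h2 : ‖f (θ' + h)‖ + ‖f θ'‖ ≤ 2 * max ‖f (θ' + h)‖ ‖f θ'‖ := by
        have := le_max_left ‖f (θ' + h)‖ ‖f θ'‖
        have := le_max_right ‖f (θ' + h)‖ ‖f θ'‖
        linarith
      have heq : ‖a m₀‖ * (η / (2*π)) ^ (N+1) = ‖a m₀‖ * (η / π) * (η / (2*π)) ^ N / 2 := by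
        rw [pow_succ]
        field_simp
      rw [heq]
      linarith
    obtain ⟨hθ'l, hθ'r⟩ := hθ'mem
    rcases max_cases ‖f (θ' + h)‖ ‖f θ'‖ with ⟨hc, _⟩ | ⟨hc, _⟩
    · exact ⟨θ' + h, ⟨by linarith, by push_cast; linarith⟩, le_trans hkey (le_of_eq hc)⟩
    · exact ⟨θ', ⟨hθ'l, by push_cast; linarith⟩, le_trans hkey (le_of_eq hc)⟩

lemma sep_count {n : ℕ} (s : ℝ) (hs : 1 ≤ s) (T : Finset (Fin n))
    (hsep : ∀ t ∈ T, ∀ t' ∈ T, t ≠ t' → s ≤ |(((t : ℕ) : ℝ)) - (((t' : ℕ) : ℝ))|) :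
    (T.card : ℝ) ≤ (n : ℝ) / s + 1 := by
  have hs0 : (0:ℝ) < s := lt_of_lt_of_le one_pos hs
  have hinj : Set.InjOn (fun t : Fin n => ⌊((t : ℕ) : ℝ) / s⌋₊) T := by
    intro x hx y hy hxy
    by_contra hne
    have h1 := hsep x hx y hy hne
    have hxy' : ⌊((x : ℕ) : ℝ) / s⌋₊ = ⌊((y : ℕ) : ℝ) / s⌋₊ := hxy
    have hx0 : (0:ℝ) ≤ ((x : ℕ) : ℝ) / s := by positivity
    have hy0 : (0:ℝ) ≤ ((y : ℕ) : ℝ) / s := by positivity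
    have l1 := Nat.floor_le hx0
    have l2 := Nat.lt_floor_add_one (((x : ℕ) : ℝ) / s)
    have l3 := Nat.floor_le hy0
    have l4 := Nat.lt_floor_add_one (((y : ℕ) : ℝ) / s)
    rw [hxy'] at l1 l2
    have d1 : ((x : ℕ) : ℝ) - ((y : ℕ) : ℝ) < s := by
      have h' : (((x : ℕ) : ℝ) - ((y : ℕ) : ℝ)) / s < 1 := by
        rw [sub_div]; linarith
      exact (div_lt_one hs0).mp h'
    have d2 : ((y : ℕ) : ℝ) - ((x : ℕ) : ℝ) < s := by
      have h' : (((y : ℕ) : ℝ) - ((x : ℕ) : ℝ)) / s < 1 := by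
        rw [sub_div]; linarith
      exact (div_lt_one hs0).mp h'
    rcases abs_cases (((x : ℕ) : ℝ) - ((y : ℕ) : ℝ)) with ⟨he, _⟩ | ⟨he, _⟩ <;> rw [he] at h1 <;>
      linarith
  have hcard : T.card = (T.image (fun t : Fin n => ⌊((t : ℕ) : ℝ) / s⌋₊)).card :=
    (Finset.card_image_of_injOn hinj).symm
  have hsubset : T.image (fun t : Fin n => ⌊((t : ℕ) : ℝ) / s⌋₊) ⊆
      Finset.range (⌊(n : ℝ) / s⌋₊ + 1) := by
    intro v hv
    obtain ⟨t, _, rfl⟩ := Finset.mem_image.mp hv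
    rw [Finset.mem_range, Nat.lt_succ_iff]
    apply Nat.floor_le_floor
    gcongr
    exact_mod_cast le_of_lt t.isLt
  have := Finset.card_le_card hsubset
  rw [hcard]
  calc ((T.image (fun t : Fin n => ⌊((t : ℕ) : ℝ) / s⌋₊)).card : ℝ)
      ≤ (⌊(n : ℝ) / s⌋₊ + 1 : ℕ) := by exact_mod_cast le_trans this (le_of_eq (Finset.card_range _))
    _ ≤ (n : ℝ) / s + 1 := by
        push_cast
        have : (⌊(n : ℝ) / s⌋₊ : ℝ) ≤ (n : ℝ) / s := Nat.floor_le (by positivity)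
        linarith

set_option maxHeartbeats 1000000 in
lemma numeric_bound (d n N : ℕ) (μ Δ L m η : ℝ) (hd : 1 ≤ d) (hn : 2 ≤ n)
    (hμ0 : 0 ≤ μ) (hμ1 : μ < 1) (hΔ : 1 ≤ Δ) (hL : 1 ≤ L) (hLn : L ≤ (n:ℝ)^Δ)
    (hN1 : 1 ≤ N) (hNbound : (N:ℝ) ≤ 4*(n:ℝ)^(1-μ)) (hm : m = (n:ℝ)^(d-1))
    (hη : η = π / (L * m) / N) :
    Real.exp (-(4*(d:ℝ)+16) * Δ * L * (n:ℝ)^(1-μ) * Real.log n) ≤ (η/(2*π))^(N-1) := by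
  have hπ := Real.pi_pos
  have hn0 : (0:ℝ) < n := by positivity
  have hn1 : (1:ℝ) ≤ (n:ℝ) := by exact_mod_cast Nat.one_le_of_lt hn
  have hn2 : (2:ℝ) ≤ (n:ℝ) := by exact_mod_cast hn
  have hP2 : (1:ℝ) ≤ (n:ℝ) ^ (1 - μ) := Real.one_le_rpow hn1 (by linarith)
  have hN0 : (0:ℝ) < (N : ℝ) := by exact_mod_cast hN1
  have hL0 : (0:ℝ) < L := lt_of_lt_of_le one_pos hL
  have hm1 : (1:ℝ) ≤ m := by rw [hm]; exact one_le_pow₀ hn1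
  have hm0 : (0:ℝ) < m := lt_of_lt_of_le one_pos hm1
  set B : ℝ := 2 * L * m * (N:ℝ) with hBdef
  have hB0 : 0 < B := mul_pos (mul_pos (mul_pos two_pos hL0) hm0) hN0
  have hN1' : (1:ℝ) ≤ (N:ℝ) := by exact_mod_cast hN1
  have t1 : (1:ℝ) ≤ 2*L := by linarith
  have t2 : (1:ℝ) ≤ (2*L)*m := by
    have := mul_le_mul t1 hm1 zero_le_one (by linarith : (0:ℝ) ≤ 2*L)
    linarith
  have hB1 : 1 ≤ B := by
    have t3 := mul_le_mul t2 hN1' zero_le_one (by linarith : (0:ℝ) ≤ (2*L)*m)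
    rw [hBdef]
    nlinarith
  have hηB : η / (2*π) = 1 / B := by
    rw [hη, hBdef]
    field_simp
  have hexp : (η/(2*π))^(N-1) = Real.exp (((N-1 : ℕ) : ℝ) * (-Real.log B)) := by
    rw [hηB, Real.exp_nat_mul, Real.exp_neg, Real.exp_log hB0, one_div]
  rw [hexp, Real.exp_le_exp]
  have hln : 0 < Real.log n := Real.log_pos (by exact_mod_cast hn)
  have hlogB : Real.log B ≤ (Δ + (d:ℝ) + 3) * Real.log n := by
    have hmn : m * (n:ℝ) = (n:ℝ)^(d:ℕ) := by
      rw [hm, ← pow_succ]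
      congr 1
      omega
    have hNn : (N:ℝ) ≤ 4 * (n:ℝ) := by
      have hle : (n:ℝ)^(1-μ) ≤ (n:ℝ) := by
        calc (n:ℝ)^(1-μ) ≤ (n:ℝ)^(1:ℝ) :=
              Real.rpow_le_rpow_of_exponent_le hn1 (by linarith)
          _ = n := Real.rpow_one _
      linarith
    have h8 : (8:ℝ) ≤ (n:ℝ)^(3:ℕ) := by
      have h23 : (2:ℝ)^(3:ℕ) ≤ (n:ℝ)^(3:ℕ) := by exact pow_le_pow_left₀ (by norm_num : (0:ℝ) ≤ 2) hn2 3
      norm_num at h23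
      linarith
    have hBle : B ≤ (n:ℝ) ^ (Δ + (d:ℝ) + 3) := by
      have e1 : (n:ℝ) ^ (Δ + (d:ℝ) + 3) = (n:ℝ)^Δ * (n:ℝ)^(d:ℕ) * (n:ℝ)^(3:ℕ) := by
        rw [Real.rpow_add hn0, Real.rpow_add hn0, Real.rpow_natCast,
          show ((3:ℝ)) = ((3:ℕ):ℝ) by norm_num, Real.rpow_natCast]
      have hΔp : (0:ℝ) < (n:ℝ)^Δ := Real.rpow_pos_of_pos hn0 Δ
      have hΔ1 : (1:ℝ) ≤ (n:ℝ)^Δ := Real.one_le_rpow hn1 (by linarith)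
      rw [e1]
      calc B = 2 * L * m * (N:ℝ) := hBdef
        _ ≤ 2 * (n:ℝ)^Δ * m * (4*(n:ℝ)) := by
            have u1 : 2*L*m ≤ 2*(n:ℝ)^Δ*m := by
              nlinarith [mul_nonneg (sub_nonneg.mpr hLn) (le_of_lt hm0)]
            have u2 := mul_le_mul u1 hNn (by positivity) (by positivity : (0:ℝ) ≤ 2*(n:ℝ)^Δ*m)
            nlinarith
        _ = 8 * ((n:ℝ)^Δ * (m * (n:ℝ))) := by ring
        _ = 8 * ((n:ℝ)^Δ * (n:ℝ)^(d:ℕ)) := by rw [hmn]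
        _ ≤ (n:ℝ)^(3:ℕ) * ((n:ℝ)^Δ * (n:ℝ)^(d:ℕ)) := by
            have hpos : (0:ℝ) < (n:ℝ)^Δ * (n:ℝ)^(d:ℕ) := by positivity
            nlinarith [mul_le_mul_of_nonneg_right h8 (le_of_lt hpos)]
        _ = (n:ℝ)^Δ * (n:ℝ)^(d:ℕ) * (n:ℝ)^(3:ℕ) := by ring
    calc Real.log B ≤ Real.log ((n:ℝ)^(Δ+(d:ℝ)+3)) := Real.log_le_log hB0 hBle
      _ = (Δ + (d:ℝ) + 3) * Real.log n := Real.log_rpow hn0 _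
  have hlogB0 : 0 ≤ Real.log B := Real.log_nonneg hB1
  have hA4P : ((N-1:ℕ):ℝ) ≤ 4 * (n:ℝ)^(1-μ) := by
    have h' : ((N-1:ℕ):ℝ) ≤ (N:ℝ) := by exact_mod_cast Nat.sub_le N 1
    linarith
  have hA0 : (0:ℝ) ≤ ((N-1:ℕ):ℝ) := by positivity
  have s1 : ((N-1:ℕ):ℝ) * Real.log B ≤
      (4 * (n:ℝ)^(1-μ)) * ((Δ + (d:ℝ) + 3) * Real.log n) :=
    mul_le_mul hA4P hlogB hlogB0 (by positivity)
  have key1 : (4*Δ + 4*(d:ℝ) + 12) ≤ (4*(d:ℝ)+16)*Δ*L := by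
    nlinarith [mul_nonneg (sub_nonneg.mpr hΔ) (by positivity : (0:ℝ) ≤ 4*(d:ℝ)+12),
      mul_nonneg (mul_nonneg (by positivity : (0:ℝ) ≤ 4*(d:ℝ)+16) (by linarith : (0:ℝ) ≤ Δ))
        (sub_nonneg.mpr hL)]
  have hPl : (0:ℝ) ≤ (n:ℝ)^(1-μ) * Real.log n :=
    le_of_lt (mul_pos (lt_of_lt_of_le one_pos hP2) hln)
  have s2 : (4 * (n:ℝ)^(1-μ)) * ((Δ + (d:ℝ) + 3) * Real.log n) ≤
      (4*(d:ℝ)+16) * Δ * L * ((n:ℝ)^(1-μ)) * Real.log n := by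
    nlinarith [mul_le_mul_of_nonneg_right key1 hPl]
  nlinarith [s1, s2]

set_option maxHeartbeats 1000000 in
theorem stmt_4 (d : ℕ) (hd : 1 ≤ d) (μ : ℝ) (hμ0 : 0 ≤ μ) (hμ1 : μ < 1) :
    ∃ C : ℝ, 0 < C ∧ ∀ n : ℕ, 2 ≤ n → ∀ c : (Fin d → Fin n) → ℤ,
      (∀ k, c k = 0 ∨ c k = 1 ∨ c k = -1) →
      (∃ k, c k ≠ 0) →
      (∃ j : Fin d, ∀ k k' : Fin d → Fin n, c k ≠ 0 → c k = c k' → k ≠ k' →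
        (n : ℝ) ^ μ ≤ |((k j : ℕ) : ℝ) - ((k' j : ℕ) : ℝ)|) →
      ∀ Δ L : ℝ, 1 ≤ Δ → 1 ≤ L → L ≤ (n : ℝ) ^ Δ →
        ∃ z : Fin d → ℂ,
          (∀ i, ∃ θ : ℝ, |θ| ≤ π / L ∧ z i = Complex.exp (θ * Complex.I)) ∧
          Real.exp (-C * Δ * L * (n : ℝ) ^ (1 - μ) * Real.log n) ≤
            ‖∑ k : Fin d → Fin n, (c k : ℂ) * ∏ i, z i ^ (k i : ℕ)‖ := by
  classical
  have hπ := Real.pi_pos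
  refine ⟨4 * d + 16, by positivity, ?_⟩
  intro n hn c hcoef hne hsparse Δ L hΔ hL hLn
  obtain ⟨j, hj⟩ := hsparse
  obtain ⟨k₀, hk₀⟩ := hne
  have hn0 : (0:ℝ) < n := by positivity
  have hn1 : (1:ℝ) ≤ (n:ℝ) := by exact_mod_cast Nat.one_le_of_lt hn
  have hn2 : (2:ℝ) ≤ (n:ℝ) := by exact_mod_cast hn
  -- the separation parameter
  set s : ℝ := (n:ℝ) ^ μ with hsdef
  have hs1 : 1 ≤ s := Real.one_le_rpow hn1 hμ0
  -- support
  set S : Finset (Fin d → Fin n) := Finset.univ.filter (fun k => c k ≠ 0) with hSdef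
  have hk₀S : k₀ ∈ S := by simp [hSdef, hk₀]
  set N := S.card with hNdef
  have hN1 : 1 ≤ N := Finset.card_pos.mpr ⟨k₀, hk₀S⟩
  -- counting: N ≤ 2 n^{1-μ} + 2
  have hP2 : (1:ℝ) ≤ (n:ℝ) ^ (1 - μ) := Real.one_le_rpow hn1 (by linarith)
  have hNbound : (N : ℝ) ≤ 4 * (n:ℝ) ^ (1 - μ) := by
    have count_sign : ∀ v : ℤ, v ≠ 0 →
        ((Finset.univ.filter (fun k => c k = v)).card : ℝ) ≤ (n:ℝ) / s + 1 := by
      intro v hv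
      set P := Finset.univ.filter (fun k => c k = v) with hPdef
      have hinjP : Set.InjOn (fun k : Fin d → Fin n => k j) P := by
        intro x hx y hy hxy
        by_contra hne'
        simp only [hPdef, Finset.coe_filter, Set.mem_setOf_eq] at hx hy
        have h1 := hj x y (hx.2 ▸ hv) (hx.2.trans hy.2.symm) hne'
        rw [show ((x j : ℕ) : ℝ) = ((y j : ℕ) : ℝ) by exact_mod_cast congrArg (fun t : Fin n => ((t : ℕ) : ℝ)) hxy] at h1
        simp at h1
        linarith
      have hcardP : P.card = (P.image (fun k => k j)).card :=
        (Finset.card_image_of_injOn hinjP).symm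
      rw [hcardP]
      apply sep_count s hs1
      intro t ht t' ht' htt'
      obtain ⟨x, hx, rfl⟩ := Finset.mem_image.mp ht
      obtain ⟨y, hy, rfl⟩ := Finset.mem_image.mp ht'
      simp only [hPdef, Finset.mem_filter, Finset.mem_univ, true_and] at hx hy
      exact hj x y (hx ▸ hv) (hx.trans hy.symm) (fun hh => htt' (congrArg (fun k => k j) hh))
    have hsub : S ⊆ (Finset.univ.filter (fun k => c k = 1)) ∪ (Finset.univ.filter (fun k => c k = -1)) := by
      intro k hk
      simp only [hSdef, Finset.mem_filter, Finset.mem_univ, true_and] at hk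
      rcases hcoef k with h | h | h
      · exact absurd h hk
      · exact Finset.mem_union_left _ (by simp [h])
      · exact Finset.mem_union_right _ (by simp [h])
    have h1 := count_sign 1 one_ne_zero
    have h2 := count_sign (-1) (by norm_num)
    have h3 : (N:ℝ) ≤ ((Finset.univ.filter (fun k => c k = 1)).card : ℝ)
        + ((Finset.univ.filter (fun k => c k = -1)).card : ℝ) := by
      have := le_trans (Finset.card_le_card hsub) (Finset.card_union_le _ _)
      exact_mod_cast this
    have hdiv : (n:ℝ) / s = (n:ℝ) ^ (1 - μ) := by
      rw [hsdef, Real.rpow_sub hn0, Real.rpow_one]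
    rw [hdiv] at h1 h2
    linarith
  -- parameters
  set m : ℝ := (n:ℝ) ^ (d - 1) with hmdef
  have hm1 : (1:ℝ) ≤ m := one_le_pow₀ hn1
  have hm0 : (0:ℝ) < m := lt_of_lt_of_le one_pos hm1
  set δ : ℝ := π / (L * m) with hδdef
  have hδ0 : 0 < δ := by positivity
  have hδπ : δ ≤ π := by
    rw [hδdef]
    apply div_le_self hπ.le
    nlinarith
  set η : ℝ := δ / N with hηdef
  have hη0 : 0 < η := by positivity
  have hηπ : η ≤ π := by
    rw [hηdef]
    calc δ / N ≤ δ / 1 := by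
          apply div_le_div_of_nonneg_left (le_of_lt hδ0) one_pos
          exact_mod_cast hN1
      _ = δ := div_one δ
      _ ≤ π := hδπ
  -- frequencies
  set lam : (Fin d → Fin n) → ℤ := fun k => ((finFunctionFinEquiv k : ℕ) : ℤ) with hlamdef
  have hlaminj : Set.InjOn lam S := by
    intro x _ y _ hxy
    apply finFunctionFinEquiv.injective
    have : ((finFunctionFinEquiv x : ℕ) : ℤ) = ((finFunctionFinEquiv y : ℕ) : ℤ) := hxy
    exact Fin.ext (by exact_mod_cast this)
  -- apply key lemma
  obtain ⟨θ, hθmem, hθ⟩ := key_lemma lam η hη0 hηπ (N - 1) S (by omega)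
    (fun k => (c k : ℂ)) k₀ hk₀S hlaminj 0
  have hak₀ : ‖((c k₀ : ℂ))‖ = 1 := by
    rcases hcoef k₀ with h | h | h
    · exact absurd h hk₀
    · rw [h]; simp
    · rw [h]; simp
  -- bounds on θ
  have hθ0 : 0 ≤ θ := hθmem.1
  have hθδ : θ ≤ δ := by
    have h1 : θ ≤ 0 + ((N - 1 : ℕ) : ℝ) * η := hθmem.2
    have h2 : ((N - 1 : ℕ) : ℝ) ≤ (N : ℝ) := by exact_mod_cast Nat.sub_le N 1
    have h3 : ((N - 1 : ℕ) : ℝ) * η ≤ (N : ℝ) * η := by nlinarith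
    have hN0 : (0:ℝ) < (N : ℝ) := by exact_mod_cast hN1
    have h4 : (N : ℝ) * η = δ := by
      rw [hηdef, mul_div_cancel₀ _ (ne_of_gt hN0)]
    linarith
  -- define the point
  refine ⟨fun i => Complex.exp (((θ * (n:ℝ) ^ (i:ℕ)) : ℝ) * I), ?_, ?_⟩
  · intro i
    refine ⟨θ * (n:ℝ) ^ (i:ℕ), ?_, rfl⟩
    have hpowle : (n:ℝ) ^ (i:ℕ) ≤ m := by
      rw [hmdef]
      apply pow_le_pow_right₀ hn1
      omega
    have hp0 : (0:ℝ) ≤ (n:ℝ) ^ (i:ℕ) := by positivity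
    rw [_root_.abs_of_nonneg (mul_nonneg hθ0 hp0)]
    calc θ * (n:ℝ) ^ (i:ℕ) ≤ δ * m := by nlinarith
      _ = π / L := by rw [hδdef]; field_simp
  · -- rewrite the sum
    have hpoint : ∀ k : Fin d → Fin n,
        (∏ i : Fin d, Complex.exp (((θ * (n:ℝ) ^ (i:ℕ)) : ℝ) * I) ^ (k i : ℕ))
          = Complex.exp ((lam k : ℂ) * θ * I) := by
      intro k
      have h1 : ∀ i : Fin d, Complex.exp (((θ * (n:ℝ) ^ (i:ℕ)) : ℝ) * I) ^ (k i : ℕ)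
          = Complex.exp (((k i : ℕ) : ℂ) * ((n:ℂ) ^ (i:ℕ)) * θ * I) := by
        intro i
        rw [← Complex.exp_nat_mul]
        congr 1
        push_cast
        ring
      simp_rw [h1, ← Complex.exp_sum]
      congr 1
      have h2 : ((lam k : ℂ)) = ∑ i : Fin d, ((k i : ℕ) : ℂ) * (n:ℂ) ^ (i:ℕ) := by
        simp only [hlamdef]
        rw [finFunctionFinEquiv_apply]
        push_cast
        ring
      rw [h2, Finset.sum_mul, Finset.sum_mul]
    have hsumeq : ∑ k : Fin d → Fin n, (c k : ℂ) * ∏ i : Fin d,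
          Complex.exp (((θ * (n:ℝ) ^ (i:ℕ)) : ℝ) * I) ^ (k i : ℕ)
        = ∑ k ∈ S, (c k : ℂ) * Complex.exp ((lam k : ℂ) * θ * I) := by
      rw [← Finset.sum_subset (Finset.subset_univ S)]
      · exact Finset.sum_congr rfl (fun k _ => by rw [hpoint k])
      · intro k _ hk
        simp only [hSdef, Finset.mem_filter, Finset.mem_univ, true_and, not_not] at hk
        rw [hk]
        simp
    rw [hsumeq]
    refine le_trans ?_ (le_trans (le_of_eq (by rw [hak₀, one_mul])) hθ)
    exact numeric_bound d n N μ Δ L m η hd hn hμ0 hμ1 hΔ hL hLn hN1 hNbound hmdef (by rw [hηdef, hδdef])
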